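/- Let γ ≥ 1 and h ∈ (0,1], let 𝒫 be the projection operator, and let f : ℝ^d → ℝ^d satisfy ‖f(x) − f(y)‖ ≤ C₁(1 + ‖x‖ + ‖y‖)^{γ−1}‖x − y‖ for all x, y ∈ ℝ^d and some constant C₁ ≥ 0. Then for all x, y ∈ ℝ^d: ‖f(𝒫(x)) − f(𝒫(y))‖ ≤ 3^{γ−1} C₁ h^{−(γ−1)/(2γ)}‖x − y‖. -/

import Mathlib

open RealInnerProductSpace

/-- The projection operator `𝒫(x) = min {1, h^{-1/(2γ)} ‖x‖⁻¹} • x`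
(with `𝒫(0) = 0`, since in `ℝ` we have `0⁻¹ = 0`). -/
noncomputable def proj {d : ℕ} (γ h : ℝ) (x : EuclideanSpace ℝ (Fin d)) :
    EuclideanSpace ℝ (Fin d) :=
  min 1 (h ^ (-(1 : ℝ) / (2 * γ)) * ‖x‖⁻¹) • x

lemma aux_min_mul {R X : ℝ} (hR : 0 < R) (hX : 0 ≤ X) :
    min 1 (R * X⁻¹) * X = min X R := by
  rcases eq_or_lt_of_le hX with h | h
  · simp [← h, hR.le]
  · rcases le_total X R with hXR | hXR
    · have h1 : (1 : ℝ) ≤ R * X⁻¹ := by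
        rw [← div_eq_mul_inv, le_div_iff₀ h]; linarith
      rw [min_eq_left h1, min_eq_left hXR, one_mul]
    · have h1 : R * X⁻¹ ≤ 1 := by
        rw [← div_eq_mul_inv, div_le_one h]; linarith
      rw [min_eq_right h1, min_eq_right hXR, mul_assoc, inv_mul_cancel₀ h.ne', mul_one]

lemma aux_lip {d : ℕ} {R : ℝ} (hR : 0 < R) (x y : EuclideanSpace ℝ (Fin d)) :
    ‖min 1 (R * ‖x‖⁻¹) • x - min 1 (R * ‖y‖⁻¹) • y‖ ≤ ‖x - y‖ := by
  set a := min 1 (R * ‖x‖⁻¹) with ha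
  set b := min 1 (R * ‖y‖⁻¹) with hb
  have ha0 : 0 ≤ a := le_min one_pos.le (by positivity)
  have hb0 : 0 ≤ b := le_min one_pos.le (by positivity)
  have ha1 : a ≤ 1 := min_le_left _ _
  have hb1 : b ≤ 1 := min_le_left _ _
  set X := ‖x‖ with hX
  set Y := ‖y‖ with hY
  have hX0 : 0 ≤ X := norm_nonneg _
  have hY0 : 0 ≤ Y := norm_nonneg _
  have haX : a * X = min X R := aux_min_mul hR hX0
  have hbY : b * Y = min Y R := aux_min_mul hR hY0
  have hminlip : |min X R - min Y R| ≤ |X - Y| := by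
    rcases le_total X R with h1 | h1 <;> rcases le_total Y R with h2 | h2 <;>
      simp only [min_eq_left h1, min_eq_right h1, min_eq_left h2, min_eq_right h2] <;>
      rw [abs_le] <;> constructor <;>
      cases abs_cases (X - Y) <;> linarith
  have hsq : (a * X - b * Y) ^ 2 ≤ (X - Y) ^ 2 := by
    rw [haX, hbY, ← sq_abs, ← sq_abs (X - Y)]
    exact pow_le_pow_left₀ (abs_nonneg _) hminlip 2
  have ht : (inner ℝ x y : ℝ) ≤ X * Y := real_inner_le_norm x y
  have key : ‖a • x - b • y‖ ^ 2 ≤ ‖x - y‖ ^ 2 := by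
    rw [@norm_sub_sq_real, @norm_sub_sq_real]
    rw [real_inner_smul_left, real_inner_smul_right, norm_smul, norm_smul]
    rw [Real.norm_eq_abs, Real.norm_eq_abs, abs_of_nonneg ha0, abs_of_nonneg hb0]
    have hab : a * b ≤ 1 := mul_le_one₀ ha1 hb0 hb1
    nlinarith [mul_nonneg (sub_nonneg.2 hab) (sub_nonneg.2 ht), hsq]
  exact (pow_le_pow_iff_left₀ (norm_nonneg _) (norm_nonneg _) two_ne_zero).mp key

lemma aux_norm_le {d : ℕ} {R : ℝ} (hR : 0 < R) (x : EuclideanSpace ℝ (Fin d)) :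
    ‖min 1 (R * ‖x‖⁻¹) • x‖ ≤ R := by
  rw [norm_smul, Real.norm_eq_abs,
    abs_of_nonneg (le_min one_pos.le (by positivity)),
    aux_min_mul hR (norm_nonneg x)]
  exact min_le_right _ _

/-- If `f` satisfies the polynomial Lipschitz condition with constant `C₁`
and exponent `γ - 1`, then `f ∘ 𝒫` is globally Lipschitz with constant
`3^{γ-1} C₁ h^{-(γ-1)/(2γ)}`. -/
theorem stmt_10 {d : ℕ} (γ h : ℝ) (hγ : 1 ≤ γ) (hh0 : 0 < h) (hh1 : h ≤ 1)
    (C₁ : ℝ) (hC₁ : 0 ≤ C₁)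
    (f : EuclideanSpace ℝ (Fin d) → EuclideanSpace ℝ (Fin d))
    (hf : ∀ x y : EuclideanSpace ℝ (Fin d),
      ‖f x - f y‖ ≤ C₁ * (1 + ‖x‖ + ‖y‖) ^ (γ - 1) * ‖x - y‖) :
    ∀ x y : EuclideanSpace ℝ (Fin d),
      ‖f (proj γ h x) - f (proj γ h y)‖ ≤
        (3 : ℝ) ^ (γ - 1) * C₁ * h ^ (-(γ - 1) / (2 * γ)) * ‖x - y‖ := by
  intro x y
  set R : ℝ := h ^ (-(1 : ℝ) / (2 * γ)) with hRdef
  have hR : 0 < R := Real.rpow_pos_of_pos hh0 _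
  have hR1 : 1 ≤ R := by
    apply Real.one_le_rpow_of_pos_of_le_one_of_nonpos hh0 hh1
    have hγ0 : 0 < γ := lt_of_lt_of_le one_pos hγ
    rw [div_nonpos_iff]
    right; constructor <;> linarith
  have hlip : ‖proj γ h x - proj γ h y‖ ≤ ‖x - y‖ := aux_lip hR x y
  have hbx : ‖proj γ h x‖ ≤ R := aux_norm_le hR x
  have hby : ‖proj γ h y‖ ≤ R := aux_norm_le hR y
  have hbase : 1 + ‖proj γ h x‖ + ‖proj γ h y‖ ≤ 3 * R := by linarith
  have hγ1 : (0 : ℝ) ≤ γ - 1 := by linarith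
  have hpow : (1 + ‖proj γ h x‖ + ‖proj γ h y‖) ^ (γ - 1) ≤ (3 * R) ^ (γ - 1) := by
    apply Real.rpow_le_rpow (by positivity) hbase hγ1
  have hRpow : (3 * R) ^ (γ - 1) = 3 ^ (γ - 1) * h ^ (-(γ - 1) / (2 * γ)) := by
    rw [Real.mul_rpow (by norm_num) hR.le, hRdef, ← Real.rpow_mul hh0.le]
    congr 1
    ring_nf
  calc ‖f (proj γ h x) - f (proj γ h y)‖
      ≤ C₁ * (1 + ‖proj γ h x‖ + ‖proj γ h y‖) ^ (γ - 1) * ‖proj γ h x - proj γ h y‖ :=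
        hf _ _
    _ ≤ C₁ * ((3 * R) ^ (γ - 1)) * ‖x - y‖ := by
        apply mul_le_mul (mul_le_mul le_rfl hpow (by positivity) hC₁) hlip
          (norm_nonneg _) (by positivity)
    _ = (3 : ℝ) ^ (γ - 1) * C₁ * h ^ (-(γ - 1) / (2 * γ)) * ‖x - y‖ := by
        rw [hRpow]; ring
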